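/- Let Q be the set of literals in the reified encoding β^n not occurring in the direct encoding β^n_d (i.e., literals formed with d_law, s_law, head, action, prec, all_h, prec_h, imp). Then for any program R whose literals are disjoint from Q, β^n ∪ R is a strong conservative extension of β^n_d ∪ R with respect to Q. -/

import Mathlib

/-- A ground rule of A-Prolog: head (none = ⊥, i.e. a constraint),
positive body atoms, and default-negated body atoms. -/
structure ASPRule (L : Type) where
  head : Option L
  pos : Set L
  neg : Set L

/-- `Closed X Y P`: `Y` is closed under the Gelfond–Lifschitz reduct of `P`
relative to `X`. -/
def Closed {L : Type} (X Y : Set L) (P : Set (ASPRule L)) : Prop :=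
  ∀ r ∈ P, (∀ l ∈ r.neg, l ∉ X) → r.pos ⊆ Y → ∃ l, r.head = some l ∧ l ∈ Y

/-- `X` is an answer set of `P`: `X` is minimal among the sets closed under
the reduct `P^X`. -/
def AnswerSet {L : Type} (P : Set (ASPRule L)) (X : Set L) : Prop :=
  Closed X X P ∧ ∀ Y ⊆ X, Closed X Y P → Y = X

/-- A fact. -/
def fact {L : Type} (a : L) : ASPRule L := ⟨some a, ∅, ∅⟩
/-- A fluent literal: a fluent together with a sign (`true` = positive). -/
abbrev FLit (F : Type) := F × Bool

/-- The complement of a fluent literal. -/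
def fcompl {F : Type} (l : FLit F) : FLit F := (l.1, !l.2)

/-- A dynamic causal law `causes(act, hd, pre)` with ordered preconditions. -/
structure DynLaw (A F : Type) where
  act : A
  hd : FLit F
  pre : List (FLit F)

/-- A static causal law `caused(hd, pre)` with ordered preconditions. -/
structure StatLaw (F : Type) where
  hd : FLit F
  pre : List (FLit F)

/-- An executability condition `impossible_if(act, pre)`. -/
structure ImpLaw (A F : Type) where
  act : A
  pre : List (FLit F)

/-- An action description of the language AL. -/
structure ActionDescr (A F : Type) where
  dyn : Set (DynLaw A F)
  stat : Set (StatLaw F)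
  imp : Set (ImpLaw A F)

/-- All literals of a list hold in `σ`. -/
def lsub {F : Type} (P : List (FLit F)) (σ : Set (FLit F)) : Prop :=
  ∀ l ∈ P, l ∈ σ

/-- Completeness: each fluent or its negation belongs to `σ`. -/
def FComplete {F : Type} (σ : Set (FLit F)) : Prop :=
  ∀ f : F, (f, true) ∈ σ ∨ (f, false) ∈ σ

/-- Consistency: no fluent literal occurs together with its complement. -/
def FConsistent {F : Type} (σ : Set (FLit F)) : Prop :=
  ∀ l ∈ σ, fcompl l ∉ σ

/-- Closure under the static causal laws. -/
def ClosedStat {A F : Type} (D : ActionDescr A F) (σ : Set (FLit F)) : Prop :=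
  ∀ s ∈ D.stat, lsub s.pre σ → s.hd ∈ σ

/-- A state of the transition system described by `D`. -/
def IsState {A F : Type} (D : ActionDescr A F) (σ : Set (FLit F)) : Prop :=
  FComplete σ ∧ FConsistent σ ∧ ClosedStat D σ

/-- `Cn_Z(S)`: the smallest set containing `S`, closed under static laws. -/
def CnZ {A F : Type} (D : ActionDescr A F) (S : Set (FLit F)) : Set (FLit F) :=
  ⋂₀ { X | S ⊆ X ∧ ∀ s ∈ D.stat, lsub s.pre X → s.hd ∈ X }

/-- `E(a,σ)`: the direct effects of compound action `a` in `σ`. -/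
def dirEff {A F : Type} (D : ActionDescr A F) (a : Set A) (σ : Set (FLit F)) :
    Set (FLit F) :=
  { l | ∃ d ∈ D.dyn, d.act ∈ a ∧ lsub d.pre σ ∧ d.hd = l }

/-- The McCain–Turner transition relation. -/
def ALTrans {A F : Type} (D : ActionDescr A F) (σ : Set (FLit F)) (a : Set A)
    (σ' : Set (FLit F)) : Prop :=
  IsState D σ ∧ IsState D σ' ∧
  (∀ i ∈ D.imp, i.act ∈ a → ¬ lsub i.pre σ) ∧
  σ' = CnZ D (dirEff D a σ ∪ (σ ∩ σ'))
/-- Names of reified laws: a dynamic or a static law. -/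
abbrev LawName (A F : Type) := DynLaw A F ⊕ StatLaw F

/-- Atoms of the reified encoding. -/
inductive AtomR (A F : Type) where
  | h : FLit F → ℕ → AtomR A F
  | o : A → ℕ → AtomR A F
  | hpd : A → ℕ → AtomR A F
  | obs : FLit F → ℕ → AtomR A F
  | noo : A → ℕ → AtomR A F          -- the literal ¬o(a,t) of the choice rules
  | dlaw : LawName A F → AtomR A F
  | slaw : LawName A F → AtomR A F
  | hd : LawName A F → FLit F → AtomR A F
  | act : LawName A F → A → AtomR A F
  | prec : LawName A F → ℕ → Option (FLit F) → AtomR A F   -- `none` is `nil`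
  | allh : LawName A F → ℕ → ℕ → AtomR A F
  | prech : LawName A F → ℕ → AtomR A F

/-- The facts `prec(d,1,l1),...,prec(d,m,lm),prec(d,m+1,nil)`. -/
def precFacts {A F : Type} (nm : LawName A F) (pre : List (FLit F)) :
    Set (ASPRule (AtomR A F)) :=
  { r | (∃ i l, pre[i]? = some l ∧ r = fact (AtomR.prec nm (i+1) (some l))) ∨
        r = fact (AtomR.prec nm (pre.length + 1) none) }

/-- `α(SD)` over horizon `n`: reifying facts for dynamic and static laws, and
constraints for executability conditions. -/
def alphaSD {A F : Type} (D : ActionDescr A F) (n : ℕ) :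
    Set (ASPRule (AtomR A F)) :=
  { r | ∃ d ∈ D.dyn, r = fact (AtomR.dlaw (Sum.inl d)) ∨
        r = fact (AtomR.hd (Sum.inl d) d.hd) ∨
        r = fact (AtomR.act (Sum.inl d) d.act) ∨ r ∈ precFacts (Sum.inl d) d.pre } ∪
  { r | ∃ s ∈ D.stat, r = fact (AtomR.slaw (Sum.inr s)) ∨
        r = fact (AtomR.hd (Sum.inr s) s.hd) ∨ r ∈ precFacts (Sum.inr s) s.pre } ∪
  { r | ∃ i ∈ D.imp, ∃ t < n,
        r = ⟨none, { x | ∃ l ∈ i.pre, x = AtomR.h l t } ∪ {AtomR.o i.act t}, ∅⟩ }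

/-- The interpreter rules (1)-(7) of the program `Π`, grounded over horizon `n`. -/
def interp (A F : Type) (n : ℕ) : Set (ASPRule (AtomR A F)) :=
  { r | ∃ nm : LawName A F, ∃ l : FLit F, ∃ a : A, ∃ t < n,
      r = ⟨some (AtomR.h l (t+1)),
           {AtomR.dlaw nm, AtomR.hd nm l, AtomR.act nm a, AtomR.o a t,
            AtomR.prech nm t}, ∅⟩ } ∪
  { r | ∃ nm : LawName A F, ∃ l : FLit F, ∃ t ≤ n,
      r = ⟨some (AtomR.h l t), {AtomR.slaw nm, AtomR.hd nm l, AtomR.prech nm t}, ∅⟩ } ∪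
  { r | ∃ nm : LawName A F, ∃ N : ℕ, ∃ t ≤ n,
      r = ⟨some (AtomR.allh nm N t), {AtomR.prec nm N none}, ∅⟩ } ∪
  { r | ∃ nm : LawName A F, ∃ N : ℕ, ∃ p : FLit F, ∃ t ≤ n,
      r = ⟨some (AtomR.allh nm N t),
           {AtomR.prec nm N (some p), AtomR.h p t, AtomR.allh nm (N+1) t}, ∅⟩ } ∪
  { r | ∃ nm : LawName A F, ∃ t ≤ n,
      r = ⟨some (AtomR.prech nm t), {AtomR.allh nm 1 t}, ∅⟩ } ∪
  { r | ∃ l : FLit F, ∃ t < n,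
      r = ⟨some (AtomR.h l (t+1)), {AtomR.h l t}, {AtomR.h (fcompl l) (t+1)}⟩ } ∪
  { r | ∃ l : FLit F, ∃ t ≤ n,
      r = ⟨none, {AtomR.h l t, AtomR.h (fcompl l) t}, ∅⟩ }

/-- The interpreter rules (8)-(10): `o(A,T) ← hpd(A,T)`, `h(L,0) ← obs(L,0)`,
and the reality check `← obs(L,T), not h(L,T)`. -/
def interpHist (A F : Type) (n : ℕ) : Set (ASPRule (AtomR A F)) :=
  { r | ∃ e : A, ∃ t < n, r = ⟨some (AtomR.o e t), {AtomR.hpd e t}, ∅⟩ } ∪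
  { r | ∃ l : FLit F, r = ⟨some (AtomR.h l 0), {AtomR.obs l 0}, ∅⟩ } ∪
  { r | ∃ l : FLit F, ∃ t ≤ n, r = ⟨none, {AtomR.obs l t}, {AtomR.h l t}⟩ }

/-- A recorded history: observations `obs(l,t)` and happenings `hpd(a,t)`. -/
structure Hist (A F : Type) where
  obs : Set (FLit F × ℕ)
  hpd : Set (A × ℕ)

/-- Union of two histories. -/
def Hist.union {A F : Type} (Γ Γ' : Hist A F) : Hist A F :=
  ⟨Γ.obs ∪ Γ'.obs, Γ.hpd ∪ Γ'.hpd⟩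

/-- The facts of a recorded history. -/
def histFacts {A F : Type} (Γ : Hist A F) : Set (ASPRule (AtomR A F)) :=
  { r | ∃ p ∈ Γ.obs, r = fact (AtomR.obs p.1 p.2) } ∪
  { r | ∃ p ∈ Γ.hpd, r = fact (AtomR.hpd p.1 p.2) }

/-- The reified encoding `α(SD,Γn)` of the domain description. -/
def alphaProg {A F : Type} (D : ActionDescr A F) (n : ℕ) (Γ : Hist A F) :
    Set (ASPRule (AtomR A F)) :=
  alphaSD D n ∪ interp A F n ∪ interpHist A F n ∪ histFacts Γ

/-- The awareness axioms `h(F,0) ← not h(¬F,0)` and `h(¬F,0) ← not h(F,0)`. -/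
def awareness (A F : Type) : Set (ASPRule (AtomR A F)) :=
  { r | ∃ f : F, r = ⟨some (AtomR.h (f, true) 0), ∅, {AtomR.h (f, false) 0}⟩ ∨
        r = ⟨some (AtomR.h (f, false) 0), ∅, {AtomR.h (f, true) 0}⟩ }

/-- The path `⟨σ0,a0,...,a_{n-1},σn⟩` is a model of the recorded history `Γ`. -/
def IsModelOf {A F : Type} (D : ActionDescr A F) (n : ℕ) (Γ : Hist A F)
    (σ : ℕ → Set (FLit F)) (a : ℕ → Set A) : Prop :=
  (∀ t < n, ALTrans D (σ t) (a t) (σ (t+1))) ∧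
  (∀ t < n, a t = { e | (e, t) ∈ Γ.hpd }) ∧
  (∀ l t, (l, t) ∈ Γ.obs → t ≤ n → l ∈ σ t)

/-- A set `X` of atoms defines the sequence `⟨σ0,a0,...,a_{n-1},σn⟩`. -/
def DefinesR {A F : Type} (n : ℕ) (X : Set (AtomR A F)) (σ : ℕ → Set (FLit F))
    (a : ℕ → Set A) : Prop :=
  (∀ k ≤ n, σ k = { l | AtomR.h l k ∈ X }) ∧
  (∀ k < n, a k = { e | AtomR.o e k ∈ X })

/-- The direct encoding `β^n_d(SD)`: rules for dynamic laws, static laws,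
executability conditions, inertia, and consistency constraints, formulated
with the atoms `h` and `o` only. -/
def betaNd {A F : Type} (D : ActionDescr A F) (n : ℕ) :
    Set (ASPRule (AtomR A F)) :=
  { r | ∃ d ∈ D.dyn, ∃ t < n,
      r = ⟨some (AtomR.h d.hd (t+1)),
           { x | ∃ l ∈ d.pre, x = AtomR.h l t } ∪ {AtomR.o d.act t}, ∅⟩ } ∪
  { r | ∃ s ∈ D.stat, ∃ t ≤ n,
      r = ⟨some (AtomR.h s.hd t), { x | ∃ l ∈ s.pre, x = AtomR.h l t }, ∅⟩ } ∪
  { r | ∃ i ∈ D.imp, ∃ t < n,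
      r = ⟨none, { x | ∃ l ∈ i.pre, x = AtomR.h l t } ∪ {AtomR.o i.act t}, ∅⟩ } ∪
  { r | ∃ l : FLit F, ∃ t < n,
      r = ⟨some (AtomR.h l (t+1)), {AtomR.h l t}, {AtomR.h (fcompl l) (t+1)}⟩ } ∪
  { r | ∃ l : FLit F, ∃ t ≤ n,
      r = ⟨none, {AtomR.h l t, AtomR.h (fcompl l) t}, ∅⟩ }

/-- The reified encoding `β^n(SD)`: the reifying facts `α(SD)` together with
the interpreter rules (1)-(7). -/
def betaN {A F : Type} (D : ActionDescr A F) (n : ℕ) :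
    Set (ASPRule (AtomR A F)) :=
  alphaSD D n ∪ interp A F n

/-- Atoms formed with the auxiliary reified predicates
`d_law, s_law, head, action, prec, all_h, prec_h`. -/
def ReifiedAtom {A F : Type} : AtomR A F → Prop
  | AtomR.dlaw _ => True
  | AtomR.slaw _ => True
  | AtomR.hd _ _ => True
  | AtomR.act _ _ => True
  | AtomR.prec _ _ _ => True
  | AtomR.allh _ _ _ => True
  | AtomR.prech _ _ => True
  | _ => False

/-- The literals occurring in a rule. -/
def ruleLits {L : Type} (r : ASPRule L) : Set L :=
  (match r.head with | some l => {l} | none => ∅) ∪ r.pos ∪ r.neg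

section Aux

variable {A F : Type}

lemma Closed.mem {L : Type} {X Y : Set L} {P : Set (ASPRule L)} (h : Closed X Y P)
    {a : L} {pos neg : Set L} (hr : (⟨some a, pos, neg⟩ : ASPRule L) ∈ P)
    (hneg : ∀ l ∈ neg, l ∉ X) (hpos : pos ⊆ Y) : a ∈ Y := by
  obtain ⟨l, hl, hlY⟩ := h _ hr hneg hpos
  obtain rfl : a = l := by simpa using hl
  exact hlY

lemma Closed.no {L : Type} {X Y : Set L} {P : Set (ASPRule L)} (h : Closed X Y P)
    {pos neg : Set L} (hr : (⟨none, pos, neg⟩ : ASPRule L) ∈ P)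
    (hneg : ∀ l ∈ neg, l ∉ X) (hpos : pos ⊆ Y) : False := by
  obtain ⟨l, hl, _⟩ := h _ hr hneg hpos
  simp at hl

/-- whether a law name belongs to the action description -/
def lawIn (D : ActionDescr A F) : LawName A F → Prop
  | Sum.inl d => d ∈ D.dyn
  | Sum.inr s => s ∈ D.stat

/-- head of a named law -/
def hdOf : LawName A F → FLit F
  | Sum.inl d => d.hd
  | Sum.inr s => s.hd

/-- preconditions of a named law -/
def preOf : LawName A F → List (FLit F)
  | Sum.inl d => d.pre
  | Sum.inr s => s.pre

/-- the canonical set of reified auxiliary atoms, relative to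
the `h`-atoms of `S`. -/
def BSet (D : ActionDescr A F) (n : ℕ) (S : Set (AtomR A F)) : Set (AtomR A F) :=
  fun x => match x with
  | AtomR.dlaw (Sum.inl d) => d ∈ D.dyn
  | AtomR.slaw (Sum.inr s) => s ∈ D.stat
  | AtomR.hd nm l => lawIn D nm ∧ l = hdOf nm
  | AtomR.act (Sum.inl d) a => d ∈ D.dyn ∧ a = d.act
  | AtomR.prec nm N p => lawIn D nm ∧
      ((∃ i l, (preOf nm)[i]? = some l ∧ N = i + 1 ∧ p = some l) ∨
        (N = (preOf nm).length + 1 ∧ p = none))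
  | AtomR.allh nm N t => lawIn D nm ∧ t ≤ n ∧ 1 ≤ N ∧ N ≤ (preOf nm).length + 1 ∧
      ∀ i l, N ≤ i + 1 → (preOf nm)[i]? = some l → AtomR.h l t ∈ S
  | AtomR.prech nm t => lawIn D nm ∧ t ≤ n ∧ ∀ l ∈ preOf nm, AtomR.h l t ∈ S
  | _ => False

lemma BSet_subset_Q (D : ActionDescr A F) (n : ℕ) (S : Set (AtomR A F)) :
    BSet D n S ⊆ { x | ReifiedAtom x } := by
  intro x hx
  cases x with
  | dlaw nm => trivial
  | slaw nm => trivial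
  | hd nm l => trivial
  | act nm a => trivial
  | prec nm N p => trivial
  | allh nm N t => trivial
  | prech nm t => trivial
  | h l t => exact hx.elim
  | o a t => exact hx.elim
  | hpd a t => exact hx.elim
  | obs l t => exact hx.elim
  | noo a t => exact hx.elim

lemma BSet_mono (D : ActionDescr A F) (n : ℕ) {S S' : Set (AtomR A F)}
    (hSS : ∀ l t, AtomR.h l t ∈ S → AtomR.h l t ∈ S') :
    BSet D n S ⊆ BSet D n S' := by
  intro x hx
  cases x with
  | allh nm N t =>
      obtain ⟨h1, h2, h3, h4, h5⟩ := hx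
      exact ⟨h1, h2, h3, h4, fun i l hi hl => hSS _ _ (h5 i l hi hl)⟩
  | prech nm t =>
      obtain ⟨h1, h2, h3⟩ := hx
      exact ⟨h1, h2, fun l hl => hSS _ _ (h3 l hl)⟩
  | dlaw nm => cases nm <;> exact hx
  | slaw nm => cases nm <;> exact hx
  | hd nm l => exact hx
  | act nm a => cases nm <;> exact hx
  | prec nm N p => exact hx
  | h l t => exact hx
  | o a t => exact hx
  | hpd a t => exact hx
  | obs l t => exact hx
  | noo a t => exact hx

lemma BSet_congr (D : ActionDescr A F) (n : ℕ) {S S' : Set (AtomR A F)}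
    (hSS : ∀ l t, AtomR.h l t ∈ S ↔ AtomR.h l t ∈ S') :
    BSet D n S = BSet D n S' :=
  Set.Subset.antisymm (BSet_mono D n fun l t => (hSS l t).mp)
    (BSet_mono D n fun l t => (hSS l t).mpr)

end Aux
section Mem

variable {A F : Type} {D : ActionDescr A F} {n : ℕ}

lemma mem_dlaw (d : DynLaw A F) (hd : d ∈ D.dyn) :
    fact (AtomR.dlaw (Sum.inl d)) ∈ betaN D n :=
  Or.inl (Or.inl (Or.inl ⟨d, hd, Or.inl rfl⟩))

lemma mem_hd_dyn (d : DynLaw A F) (hd : d ∈ D.dyn) :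
    fact (AtomR.hd (Sum.inl d) d.hd) ∈ betaN D n :=
  Or.inl (Or.inl (Or.inl ⟨d, hd, Or.inr (Or.inl rfl)⟩))

lemma mem_act (d : DynLaw A F) (hd : d ∈ D.dyn) :
    fact (AtomR.act (Sum.inl d) d.act) ∈ betaN D n :=
  Or.inl (Or.inl (Or.inl ⟨d, hd, Or.inr (Or.inr (Or.inl rfl))⟩))

lemma mem_slaw (s : StatLaw F) (hs : s ∈ D.stat) :
    fact (AtomR.slaw (Sum.inr s)) ∈ betaN D n :=
  Or.inl (Or.inl (Or.inr ⟨s, hs, Or.inl rfl⟩))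

lemma mem_hd_stat (s : StatLaw F) (hs : s ∈ D.stat) :
    fact (AtomR.hd (Sum.inr s) s.hd) ∈ betaN D n :=
  Or.inl (Or.inl (Or.inr ⟨s, hs, Or.inr (Or.inl rfl)⟩))

lemma mem_hd' (nm : LawName A F) (hnm : lawIn D nm) :
    fact (AtomR.hd nm (hdOf nm)) ∈ betaN D n := by
  cases nm with
  | inl d => exact mem_hd_dyn d hnm
  | inr s => exact mem_hd_stat s hnm

lemma mem_dslaw' (nm : LawName A F) (hnm : lawIn D nm) :
    (match nm with
      | Sum.inl _ => fact (AtomR.dlaw nm)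
      | Sum.inr _ => fact (AtomR.slaw nm)) ∈ betaN D n := by
  cases nm with
  | inl d => exact mem_dlaw d hnm
  | inr s => exact mem_slaw s hnm

lemma mem_prec_some (nm : LawName A F) (hnm : lawIn D nm) {i : ℕ} {l : FLit F}
    (hl : (preOf nm)[i]? = some l) :
    fact (AtomR.prec nm (i + 1) (some l)) ∈ betaN D n := by
  cases nm with
  | inl d => exact Or.inl (Or.inl (Or.inl ⟨d, hnm, Or.inr (Or.inr (Or.inr (Or.inl ⟨i, l, hl, rfl⟩)))⟩))
  | inr s => exact Or.inl (Or.inl (Or.inr ⟨s, hnm, Or.inr (Or.inr (Or.inl ⟨i, l, hl, rfl⟩))⟩))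

lemma mem_prec_none (nm : LawName A F) (hnm : lawIn D nm) :
    fact (AtomR.prec nm ((preOf nm).length + 1) none) ∈ betaN D n := by
  cases nm with
  | inl d => exact Or.inl (Or.inl (Or.inl ⟨d, hnm, Or.inr (Or.inr (Or.inr (Or.inr rfl)))⟩))
  | inr s => exact Or.inl (Or.inl (Or.inr ⟨s, hnm, Or.inr (Or.inr (Or.inr rfl))⟩))

lemma mem_impN (i : ImpLaw A F) (hi : i ∈ D.imp) {t : ℕ} (ht : t < n) :
    (⟨none, { x | ∃ l ∈ i.pre, x = AtomR.h l t } ∪ {AtomR.o i.act t}, ∅⟩ :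
      ASPRule (AtomR A F)) ∈ betaN D n :=
  Or.inl (Or.inr ⟨i, hi, t, ht, rfl⟩)

lemma mem_r1 (nm : LawName A F) (l : FLit F) (a : A) {t : ℕ} (ht : t < n) :
    (⟨some (AtomR.h l (t+1)),
      {AtomR.dlaw nm, AtomR.hd nm l, AtomR.act nm a, AtomR.o a t,
        AtomR.prech nm t}, ∅⟩ : ASPRule (AtomR A F)) ∈ betaN D n :=
  Or.inr (Or.inl (Or.inl (Or.inl (Or.inl (Or.inl (Or.inl ⟨nm, l, a, t, ht, rfl⟩))))))

lemma mem_r2 (nm : LawName A F) (l : FLit F) {t : ℕ} (ht : t ≤ n) :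
    (⟨some (AtomR.h l t), {AtomR.slaw nm, AtomR.hd nm l, AtomR.prech nm t}, ∅⟩ :
      ASPRule (AtomR A F)) ∈ betaN D n :=
  Or.inr (Or.inl (Or.inl (Or.inl (Or.inl (Or.inl (Or.inr ⟨nm, l, t, ht, rfl⟩))))))

lemma mem_r3 (nm : LawName A F) (N : ℕ) {t : ℕ} (ht : t ≤ n) :
    (⟨some (AtomR.allh nm N t), {AtomR.prec nm N none}, ∅⟩ :
      ASPRule (AtomR A F)) ∈ betaN D n :=
  Or.inr (Or.inl (Or.inl (Or.inl (Or.inl (Or.inr ⟨nm, N, t, ht, rfl⟩)))))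

lemma mem_r4 (nm : LawName A F) (N : ℕ) (p : FLit F) {t : ℕ} (ht : t ≤ n) :
    (⟨some (AtomR.allh nm N t),
      {AtomR.prec nm N (some p), AtomR.h p t, AtomR.allh nm (N+1) t}, ∅⟩ :
      ASPRule (AtomR A F)) ∈ betaN D n :=
  Or.inr (Or.inl (Or.inl (Or.inl (Or.inr ⟨nm, N, p, t, ht, rfl⟩))))

lemma mem_r5 (nm : LawName A F) {t : ℕ} (ht : t ≤ n) :
    (⟨some (AtomR.prech nm t), {AtomR.allh nm 1 t}, ∅⟩ :
      ASPRule (AtomR A F)) ∈ betaN D n :=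
  Or.inr (Or.inl (Or.inl (Or.inr ⟨nm, t, ht, rfl⟩)))

lemma mem_r6 (l : FLit F) {t : ℕ} (ht : t < n) :
    (⟨some (AtomR.h l (t+1)), {AtomR.h l t}, {AtomR.h (fcompl l) (t+1)}⟩ :
      ASPRule (AtomR A F)) ∈ betaN D n :=
  Or.inr (Or.inl (Or.inr ⟨l, t, ht, rfl⟩))

lemma mem_r7 (l : FLit F) {t : ℕ} (ht : t ≤ n) :
    (⟨none, {AtomR.h l t, AtomR.h (fcompl l) t}, ∅⟩ :
      ASPRule (AtomR A F)) ∈ betaN D n :=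
  Or.inr (Or.inr ⟨l, t, ht, rfl⟩)

lemma mem_d_dyn (d : DynLaw A F) (hd : d ∈ D.dyn) {t : ℕ} (ht : t < n) :
    (⟨some (AtomR.h d.hd (t+1)),
      { x | ∃ l ∈ d.pre, x = AtomR.h l t } ∪ {AtomR.o d.act t}, ∅⟩ :
      ASPRule (AtomR A F)) ∈ betaNd D n :=
  Or.inl (Or.inl (Or.inl (Or.inl ⟨d, hd, t, ht, rfl⟩)))

lemma mem_d_stat (s : StatLaw F) (hs : s ∈ D.stat) {t : ℕ} (ht : t ≤ n) :
    (⟨some (AtomR.h s.hd t), { x | ∃ l ∈ s.pre, x = AtomR.h l t }, ∅⟩ :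
      ASPRule (AtomR A F)) ∈ betaNd D n :=
  Or.inl (Or.inl (Or.inl (Or.inr ⟨s, hs, t, ht, rfl⟩)))

lemma mem_d_imp (i : ImpLaw A F) (hi : i ∈ D.imp) {t : ℕ} (ht : t < n) :
    (⟨none, { x | ∃ l ∈ i.pre, x = AtomR.h l t } ∪ {AtomR.o i.act t}, ∅⟩ :
      ASPRule (AtomR A F)) ∈ betaNd D n :=
  Or.inl (Or.inl (Or.inr ⟨i, hi, t, ht, rfl⟩))

lemma mem_d_r6 (l : FLit F) {t : ℕ} (ht : t < n) :
    (⟨some (AtomR.h l (t+1)), {AtomR.h l t}, {AtomR.h (fcompl l) (t+1)}⟩ :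
      ASPRule (AtomR A F)) ∈ betaNd D n :=
  Or.inl (Or.inr ⟨l, t, ht, rfl⟩)

lemma mem_d_r7 (l : FLit F) {t : ℕ} (ht : t ≤ n) :
    (⟨none, {AtomR.h l t, AtomR.h (fcompl l) t}, ∅⟩ :
      ASPRule (AtomR A F)) ∈ betaNd D n :=
  Or.inr ⟨l, t, ht, rfl⟩

end Mem
section Aux3

variable {A F : Type} {D : ActionDescr A F} {n : ℕ} {R : Set (ASPRule (AtomR A F))}

lemma nr_h (l : FLit F) (t : ℕ) : ¬ ReifiedAtom (AtomR.h (A := A) l t) := not_false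
lemma nr_o (a : A) (t : ℕ) : ¬ ReifiedAtom (AtomR.o (F := F) a t) := not_false

lemma neg_nonreified_betaN
    (hR : ∀ r ∈ R, ∀ x ∈ ruleLits r, ¬ ReifiedAtom x) :
    ∀ r ∈ betaN D n ∪ R, ∀ x ∈ r.neg, ¬ ReifiedAtom x := by
  rintro r (hr | hr) x hx
  · rcases hr with ((⟨d, hd, (rfl | rfl | rfl | (⟨i, l, hl, rfl⟩ | rfl))⟩ |
      ⟨s, hs, (rfl | rfl | (⟨i, l, hl, rfl⟩ | rfl))⟩) | ⟨i, hi, t, ht, rfl⟩) |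
      ((((((⟨nm, l, a, t, ht, rfl⟩ | ⟨nm, l, t, ht, rfl⟩) | ⟨nm, N, t, ht, rfl⟩) |
        ⟨nm, N, p, t, ht, rfl⟩) | ⟨nm, t, ht, rfl⟩) | ⟨l, t, ht, rfl⟩) |
        ⟨l, t, ht, rfl⟩)
    all_goals first
      | exact absurd hx (Set.notMem_empty x)
      | (have hx' : x = AtomR.h (fcompl _) (_ + 1) := hx; subst hx'; exact nr_h _ _)
  · exact hR r hr x (Or.inr hx)

lemma neg_nonreified_betaNd
    (hR : ∀ r ∈ R, ∀ x ∈ ruleLits r, ¬ ReifiedAtom x) :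
    ∀ r ∈ betaNd D n ∪ R, ∀ x ∈ r.neg, ¬ ReifiedAtom x := by
  rintro r (hr | hr) x hx
  · rcases hr with (((⟨d, hd, t, ht, rfl⟩ | ⟨s, hs, t, ht, rfl⟩) |
      ⟨i, hi, t, ht, rfl⟩) | ⟨l, t, ht, rfl⟩) | ⟨l, t, ht, rfl⟩
    all_goals first
      | exact absurd hx (Set.notMem_empty x)
      | (have hx' : x = AtomR.h (fcompl _) (_ + 1) := hx; subst hx'; exact nr_h _ _)
  · exact hR r hr x (Or.inr hx)

lemma closed_congr {L : Type} {W W' Z : Set L} {P : Set (ASPRule L)}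
    {Q : L → Prop}
    (hP : ∀ r ∈ P, ∀ x ∈ r.neg, ¬ Q x)
    (hWW' : ∀ l, ¬ Q l → (l ∈ W ↔ l ∈ W'))
    (h : Closed W Z P) : Closed W' Z P := by
  intro r hr hneg hpos
  exact h r hr (fun l hl hlW => hneg l hl ((hWW' l (hP r hr l hl)).mp hlW)) hpos

/-- L1: any set closed under the (reduct of the) reified program contains
the canonical reified atoms relative to itself. -/
lemma L1 {W Z : Set (AtomR A F)} (h : Closed W Z (betaN D n ∪ R)) :
    BSet D n Z ⊆ Z := by
  have hfact : ∀ a : AtomR A F, fact a ∈ betaN D n → a ∈ Z := fun a ha =>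
    h.mem (Or.inl ha) (fun l hl => hl.elim) (Set.empty_subset Z)
  -- allh by downward induction
  have hallh : ∀ (k N : ℕ) (nm : LawName A F) (t : ℕ), lawIn D nm → t ≤ n →
      (preOf nm).length + 1 - N ≤ k → 1 ≤ N → N ≤ (preOf nm).length + 1 →
      (∀ i l, N ≤ i + 1 → (preOf nm)[i]? = some l → AtomR.h l t ∈ Z) →
      AtomR.allh nm N t ∈ Z := by
    intro k
    induction k with
    | zero =>
        intro N nm t hnm ht hk h1 h2 hpre
        have hN : N = (preOf nm).length + 1 := le_antisymm h2 (by omega)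
        subst hN
        exact h.mem (Or.inl (mem_r3 nm _ ht))
          (fun l hl => hl.elim)
          (by intro x hx
              have hx' : x = AtomR.prec nm ((preOf nm).length + 1) none := hx
              subst hx'; exact hfact _ (mem_prec_none nm hnm))
    | succ k ih =>
        intro N nm t hnm ht hk h1 h2 hpre
        by_cases hN : N = (preOf nm).length + 1
        · subst hN
          exact h.mem (Or.inl (mem_r3 nm _ ht))
            (fun l hl => hl.elim)
            (by intro x hx
                have hx' : x = AtomR.prec nm ((preOf nm).length + 1) none := hx
                subst hx'; exact hfact _ (mem_prec_none nm hnm))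
        · have hlt : N - 1 < (preOf nm).length := by omega
          obtain ⟨p, hp⟩ : ∃ p, (preOf nm)[N - 1]? = some p :=
            ⟨(preOf nm)[N - 1], List.getElem?_eq_getElem hlt⟩
          have hNp : N - 1 + 1 = N := by omega
          have hprec : AtomR.prec nm N (some p) ∈ Z := by
            have := hfact _ (mem_prec_some nm hnm hp)
            rwa [hNp] at this
          have hhp : AtomR.h p t ∈ Z := hpre _ _ (by omega) hp
          have hnext : AtomR.allh nm (N + 1) t ∈ Z :=
            ih (N + 1) nm t hnm ht (by omega) (by omega) (by omega)
              (fun i l hi hl => hpre i l (by omega) hl)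
          exact h.mem (Or.inl (mem_r4 nm N p ht)) (fun l hl => hl.elim)
            (by
              intro x hx
              rcases hx with rfl | rfl | hx
              · exact hprec
              · exact hhp
              · have hx' : x = AtomR.allh nm (N + 1) t := hx
                subst hx'; exact hnext)
  intro x hx
  cases x with
  | dlaw nm => cases nm with
      | inl d => exact hfact _ (mem_dlaw d hx)
      | inr s => exact hx.elim
  | slaw nm => cases nm with
      | inl d => exact hx.elim
      | inr s => exact hfact _ (mem_slaw s hx)
  | hd nm l => obtain ⟨h1, rfl⟩ := hx; exact hfact _ (mem_hd' nm h1)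
  | act nm a =>
      cases nm with
      | inl d => obtain ⟨h1, rfl⟩ := hx; exact hfact _ (mem_act d h1)
      | inr s => exact hx.elim
  | prec nm N p =>
      obtain ⟨h1, (⟨i, l, hl, rfl, rfl⟩ | ⟨rfl, rfl⟩)⟩ := hx
      · exact hfact _ (mem_prec_some nm h1 hl)
      · exact hfact _ (mem_prec_none nm h1)
  | allh nm N t =>
      obtain ⟨h1, h2, h3, h4, h5⟩ := hx
      exact hallh _ N nm t h1 h2 le_rfl h3 h4 h5
  | prech nm t =>
      obtain ⟨h1, h2, h3⟩ := hx
      have hall : AtomR.allh nm 1 t ∈ Z := by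
        apply hallh _ 1 nm t h1 h2 le_rfl le_rfl (by omega)
        intro i l _ hl
        exact h3 l (List.mem_of_getElem? hl)
      exact h.mem (Or.inl (mem_r5 nm h2)) (fun l hl => hl.elim)
        (by intro x hx
            have hx' : x = AtomR.allh nm 1 t := hx
            subst hx'; exact hall)
  | h l t => exact hx.elim
  | o a t => exact hx.elim
  | hpd a t => exact hx.elim
  | obs l t => exact hx.elim
  | noo a t => exact hx.elim

end Aux3
section Aux4

variable {A F : Type} {D : ActionDescr A F} {n : ℕ} {R : Set (ASPRule (AtomR A F))}

lemma head_mem_ruleLits {L : Type} {r : ASPRule L} {l : L} (h : r.head = some l) :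
    l ∈ ruleLits r := by
  unfold ruleLits
  rw [h]
  exact Or.inl (Or.inl rfl)

lemma facts_mem {W Z : Set (AtomR A F)} (h : Closed W Z (betaN D n ∪ R)) :
    ∀ a : AtomR A F, fact a ∈ betaN D n → a ∈ Z := fun a ha =>
  h.mem (Or.inl ha) (fun l hl => hl.elim) (Set.empty_subset Z)

/-- L4: reified closure implies direct closure of the non-reified part. -/
lemma L4 {W Z : Set (AtomR A F)}
    (hR : ∀ r ∈ R, ∀ x ∈ ruleLits r, ¬ ReifiedAtom x)
    (h : Closed W Z (betaN D n ∪ R)) :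
    Closed W (Z \ { x | ReifiedAtom x }) (betaNd D n ∪ R) := by
  have hB : BSet D n Z ⊆ Z := L1 h
  have hdiff : (Z \ { x | ReifiedAtom x }) ⊆ Z := fun x hx => hx.1
  rintro r (hr | hr) hneg hpos
  · rcases hr with (((⟨d, hd, t, ht, rfl⟩ | ⟨s, hs, t, ht, rfl⟩) |
      ⟨i, hi, t, ht, rfl⟩) | ⟨l, t, ht, rfl⟩) | ⟨l, t, ht, rfl⟩
    · -- dynamic law rule
      have hprech : AtomR.prech (Sum.inl d) t ∈ Z := by
        apply hB
        refine ⟨hd, le_of_lt ht, fun l hl => ?_⟩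
        exact (hpos (Or.inl ⟨l, hl, rfl⟩)).1
      have ho : AtomR.o d.act t ∈ Z := (hpos (Or.inr rfl)).1
      have hh : AtomR.h d.hd (t + 1) ∈ Z := by
        apply h.mem (Or.inl (mem_r1 (Sum.inl d) d.hd d.act ht)) (fun l hl => hl.elim)
        intro x hx
        rcases hx with rfl | rfl | rfl | rfl | hx
        · exact facts_mem h _ (mem_dlaw d hd)
        · exact facts_mem h _ (mem_hd_dyn d hd)
        · exact facts_mem h _ (mem_act d hd)
        · exact ho
        · have hx' : x = AtomR.prech (Sum.inl d) t := hx
          subst hx'; exact hprech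
      exact ⟨_, rfl, hh, nr_h (A := A) d.hd (t+1)⟩
    · -- static law rule
      have hprech : AtomR.prech (Sum.inr s) t ∈ Z := by
        apply hB
        refine ⟨hs, ht, fun l hl => ?_⟩
        exact (hpos ⟨l, hl, rfl⟩).1
      have hh : AtomR.h s.hd t ∈ Z := by
        apply h.mem (Or.inl (mem_r2 (Sum.inr s) s.hd ht)) (fun l hl => hl.elim)
        intro x hx
        rcases hx with rfl | rfl | hx
        · exact facts_mem h _ (mem_slaw s hs)
        · exact facts_mem h _ (mem_hd_stat s hs)
        · have hx' : x = AtomR.prech (Sum.inr s) t := hx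
          subst hx'; exact hprech
      exact ⟨_, rfl, hh, nr_h (A := A) s.hd t⟩
    · exact (h.no (Or.inl (mem_impN i hi ht)) hneg (hpos.trans hdiff)).elim
    · exact ⟨_, rfl, h.mem (Or.inl (mem_r6 l ht)) hneg (hpos.trans hdiff), nr_h (A := A) l (t+1)⟩
    · exact (h.no (Or.inl (mem_r7 l ht)) hneg (hpos.trans hdiff)).elim
  · obtain ⟨l, hl, hlZ⟩ := h r (Or.inr hr) hneg (hpos.trans hdiff)
    exact ⟨l, hl, hlZ, hR r hr l (head_mem_ruleLits hl)⟩

end Aux4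
section Aux5

variable {A F : Type} {D : ActionDescr A F} {n : ℕ} {R : Set (ASPRule (AtomR A F))}

/-- L2: direct closure implies reified closure of the set extended with its
canonical reified atoms. -/
lemma L2 {W Z : Set (AtomR A F)}
    (hR : ∀ r ∈ R, ∀ x ∈ ruleLits r, ¬ ReifiedAtom x)
    (hZ : ∀ q ∈ Z, ¬ ReifiedAtom q)
    (h : Closed W Z (betaNd D n ∪ R)) :
    Closed W (Z ∪ BSet D n Z) (betaN D n ∪ R) := by
  have memZ : ∀ {x : AtomR A F}, ¬ ReifiedAtom x → x ∈ Z ∪ BSet D n Z → x ∈ Z :=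
    fun {x} hnr hx => hx.resolve_right (fun hBx => hnr (BSet_subset_Q D n Z hBx))
  have memB : ∀ {x : AtomR A F}, x ∈ Z ∪ BSet D n Z → ReifiedAtom x →
      x ∈ BSet D n Z :=
    fun {x} hx hrx => hx.resolve_left (fun hZx => hZ x hZx hrx)
  rintro r (hr | hr) hneg hpos
  · rcases hr with (((⟨d, hd, (rfl | rfl | rfl | (⟨i, l, hl, rfl⟩ | rfl))⟩ |
      ⟨s, hs, (rfl | rfl | (⟨i, l, hl, rfl⟩ | rfl))⟩) | ⟨i, hi, t, ht, rfl⟩) |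
      ((((((⟨nm, l, a, t, ht, rfl⟩ | ⟨nm, l, t, ht, rfl⟩) | ⟨nm, N, t, ht, rfl⟩) |
        ⟨nm, N, p, t, ht, rfl⟩) | ⟨nm, t, ht, rfl⟩) | ⟨l, t, ht, rfl⟩) |
        ⟨l, t, ht, rfl⟩))
    -- facts of alphaSD
    · exact ⟨_, rfl, Or.inr (show d ∈ D.dyn from hd)⟩
    · exact ⟨_, rfl, Or.inr ⟨hd, rfl⟩⟩
    · exact ⟨_, rfl, Or.inr ⟨hd, rfl⟩⟩
    · exact ⟨_, rfl, Or.inr ⟨hd, Or.inl ⟨i, l, hl, rfl, rfl⟩⟩⟩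
    · exact ⟨_, rfl, Or.inr ⟨hd, Or.inr ⟨rfl, rfl⟩⟩⟩
    · exact ⟨_, rfl, Or.inr (show s ∈ D.stat from hs)⟩
    · exact ⟨_, rfl, Or.inr ⟨hs, rfl⟩⟩
    · exact ⟨_, rfl, Or.inr ⟨hs, Or.inl ⟨i, l, hl, rfl, rfl⟩⟩⟩
    · exact ⟨_, rfl, Or.inr ⟨hs, Or.inr ⟨rfl, rfl⟩⟩⟩
    · -- executability constraint
      refine (h.no (Or.inl (mem_d_imp i hi ht)) hneg fun x hx => ?_).elim
      rcases hx with ⟨l, hl, rfl⟩ | hx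
      · exact memZ (nr_h (A := A) l t) (hpos (Or.inl ⟨l, hl, rfl⟩))
      · have hx' : x = AtomR.o i.act t := hx
        subst hx'
        exact memZ (nr_o (F := F) i.act t) (hpos (Or.inr hx))
    · -- rule (1)
      have hdl : BSet D n Z (AtomR.dlaw nm) :=
        memB (hpos (Or.inl rfl)) trivial
      cases nm with
      | inr s => exact hdl.elim
      | inl d =>
        have hd : d ∈ D.dyn := hdl
        obtain ⟨-, rfl⟩ : lawIn D (Sum.inl d) ∧ l = hdOf (Sum.inl d) :=
          memB (hpos (Or.inr (Or.inl rfl))) trivial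
        obtain ⟨-, rfl⟩ : d ∈ D.dyn ∧ a = d.act :=
          memB (hpos (Or.inr (Or.inr (Or.inl rfl)))) trivial
        have ho : AtomR.o d.act t ∈ Z :=
          memZ (nr_o (F := F) d.act t)
            (hpos (Or.inr (Or.inr (Or.inr (Or.inl rfl)))))
        obtain ⟨-, -, hpre⟩ : lawIn D (Sum.inl d) ∧ t ≤ n ∧
            ∀ l ∈ preOf (Sum.inl d), AtomR.h l t ∈ Z :=
          memB (hpos (Or.inr (Or.inr (Or.inr (Or.inr rfl))))) trivial
        have hh : AtomR.h d.hd (t + 1) ∈ Z := by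
          apply h.mem (Or.inl (mem_d_dyn d hd ht)) (fun l hl => hl.elim)
          rintro x (⟨l, hl, rfl⟩ | hx)
          · exact hpre l hl
          · have hx' : x = AtomR.o d.act t := hx
            subst hx'; exact ho
        exact ⟨_, rfl, Or.inl hh⟩
    · -- rule (2)
      have hsl : BSet D n Z (AtomR.slaw nm) :=
        memB (hpos (Or.inl rfl)) trivial
      cases nm with
      | inl d => exact hsl.elim
      | inr s =>
        have hs : s ∈ D.stat := hsl
        obtain ⟨-, rfl⟩ : lawIn D (Sum.inr s) ∧ l = hdOf (Sum.inr s) :=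
          memB (hpos (Or.inr (Or.inl rfl))) trivial
        obtain ⟨-, -, hpre⟩ : lawIn D (Sum.inr s) ∧ t ≤ n ∧
            ∀ l ∈ preOf (Sum.inr s), AtomR.h l t ∈ Z :=
          memB (hpos (Or.inr (Or.inr rfl))) trivial
        have hh : AtomR.h s.hd t ∈ Z := by
          apply h.mem (Or.inl (mem_d_stat s hs ht)) (fun l hl => hl.elim)
          rintro x ⟨l, hl, rfl⟩
          exact hpre l hl
        exact ⟨_, rfl, Or.inl hh⟩
    · -- rule (3)
      obtain ⟨hnm, hcase⟩ : lawIn D nm ∧ _ :=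
        memB (hpos rfl) trivial
      rcases hcase with ⟨i, l, hl, rfl, hcontra⟩ | ⟨rfl, -⟩
      · exact absurd hcontra (by simp)
      · refine ⟨_, rfl, Or.inr ⟨hnm, ht, by omega, le_rfl, fun i l hi hl => ?_⟩⟩
        have : (preOf nm)[i]? = none := List.getElem?_eq_none (by omega)
        rw [this] at hl
        exact absurd hl (by simp)
    · -- rule (4)
      obtain ⟨hnm, hcase⟩ : lawIn D nm ∧ _ :=
        memB (hpos (Or.inl rfl)) trivial
      rcases hcase with ⟨i, l', hl', rfl, hpl⟩ | ⟨-, hcontra⟩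
      swap
      · exact absurd hcontra (by simp)
      obtain rfl : p = l' := by simpa using hpl
      have hpt : AtomR.h p t ∈ Z :=
        memZ (nr_h (A := A) p t) (hpos (Or.inr (Or.inl rfl)))
      obtain ⟨-, -, -, -, hrest⟩ : lawIn D nm ∧ t ≤ n ∧ 1 ≤ i + 1 + 1 ∧
          i + 1 + 1 ≤ (preOf nm).length + 1 ∧
          ∀ j l, i + 1 + 1 ≤ j + 1 → (preOf nm)[j]? = some l →
            AtomR.h l t ∈ Z :=
        memB (hpos (Or.inr (Or.inr rfl))) trivial
      have hilen : i < (preOf nm).length := List.getElem?_eq_some_iff.mp hl' |>.1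
      refine ⟨_, rfl, Or.inr ⟨hnm, ht, by omega, by omega, fun j l hj hl => ?_⟩⟩
      rcases eq_or_lt_of_le hj with hji | hji
      · obtain rfl : j = i := by omega
        rw [hl'] at hl
        obtain rfl : p = l := by simpa using hl
        exact hpt
      · exact hrest j l (by omega) hl
    · -- rule (5)
      obtain ⟨hnm, -, -, -, hall⟩ : lawIn D nm ∧ t ≤ n ∧ 1 ≤ 1 ∧
          1 ≤ (preOf nm).length + 1 ∧
          ∀ j l, 1 ≤ j + 1 → (preOf nm)[j]? = some l → AtomR.h l t ∈ Z :=
        memB (hpos rfl) trivial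
      refine ⟨_, rfl, Or.inr ⟨hnm, ht, fun l hl => ?_⟩⟩
      obtain ⟨j, hj⟩ := List.getElem?_of_mem hl
      exact hall j l (by omega) hj
    · -- rule (6)
      have hlt : AtomR.h l t ∈ Z :=
        memZ (nr_h (A := A) l t) (hpos rfl)
      refine ⟨_, rfl, Or.inl ?_⟩
      apply h.mem (Or.inl (mem_d_r6 l ht)) hneg
      intro x hx
      have hx' : x = AtomR.h l t := hx
      subst hx'; exact hlt
    · -- rule (7)
      refine (h.no (Or.inl (mem_d_r7 l ht)) hneg fun x hx => ?_).elim
      rcases hx with rfl | hx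
      · exact memZ (nr_h (A := A) l t) (hpos (Or.inl rfl))
      · have hx' : x = AtomR.h (fcompl l) t := hx
        subst hx'
        exact memZ (nr_h (A := A) (fcompl l) t) (hpos (Or.inr hx))
  · -- rules of R
    have hposZ : r.pos ⊆ Z := fun x hx =>
      memZ (hR r hr x (Or.inl (Or.inr hx))) (hpos hx)
    obtain ⟨l, hl, hlZ⟩ := h r (Or.inr hr) hneg hposZ
    exact ⟨l, hl, Or.inl hlZ⟩

end Aux5
section Aux6

variable {A F : Type} {D : ActionDescr A F} {n : ℕ} {R : Set (ASPRule (AtomR A F))}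

lemma head_nonreified_betaNd
    (hR : ∀ r ∈ R, ∀ x ∈ ruleLits r, ¬ ReifiedAtom x) :
    ∀ r ∈ betaNd D n ∪ R, ∀ l, r.head = some l → ¬ ReifiedAtom l := by
  rintro r (hr | hr) l hl
  · rcases hr with (((⟨d, hd, t, ht, rfl⟩ | ⟨s, hs, t, ht, rfl⟩) |
      ⟨i, hi, t, ht, rfl⟩) | ⟨l', t, ht, rfl⟩) | ⟨l', t, ht, rfl⟩
    · obtain rfl : AtomR.h d.hd (t+1) = l := by simpa using hl
      exact nr_h _ _
    · obtain rfl : AtomR.h s.hd t = l := by simpa using hl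
      exact nr_h _ _
    · simp at hl
    · obtain rfl : AtomR.h l' (t+1) = l := by simpa using hl
      exact nr_h _ _
    · simp at hl
  · exact hR r hr l (head_mem_ruleLits hl)

end Aux6
/-- for `Q` the set of reified auxiliary literals and any
program `R` whose literals are disjoint from `Q`, `β^n ∪ R` is a strong
conservative extension of `β^n_d ∪ R` with respect to `Q`. -/
theorem betaN_strong_conservative_extension {A F : Type} (D : ActionDescr A F)
    (n : ℕ) (R : Set (ASPRule (AtomR A F)))
    (hR : ∀ r ∈ R, ∀ x ∈ ruleLits r, ¬ ReifiedAtom x) :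
    (∀ X : Set (AtomR A F), AnswerSet (betaN D n ∪ R) X →
        AnswerSet (betaNd D n ∪ R) (X \ { x | ReifiedAtom x })) ∧
    (∀ X : Set (AtomR A F), AnswerSet (betaNd D n ∪ R) X →
        ∃ B ⊆ { x : AtomR A F | ReifiedAtom x },
          AnswerSet (betaN D n ∪ R) (X ∪ B)) := by
  constructor
  · rintro X ⟨hXc, hXmin⟩
    have hagree : ∀ l : AtomR A F, ¬ ReifiedAtom l →
        (l ∈ X ↔ l ∈ X \ { x | ReifiedAtom x }) :=
      fun l hnr => ⟨fun h => ⟨h, hnr⟩, fun h => h.1⟩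
    constructor
    · exact closed_congr (neg_nonreified_betaNd hR) hagree (L4 hR hXc)
    · intro Z hZsub hZcl
      have hZcl' : Closed X Z (betaNd D n ∪ R) :=
        closed_congr (neg_nonreified_betaNd hR)
          (fun l hnr => (hagree l hnr).symm) hZcl
      have hZQ : ∀ q ∈ Z, ¬ ReifiedAtom q := fun q hq => (hZsub hq).2
      have h2 : Closed X (Z ∪ BSet D n Z) (betaN D n ∪ R) := L2 hR hZQ hZcl'
      have hsub : Z ∪ BSet D n Z ⊆ X := by
        intro x hx
        rcases hx with hx | hx
        · exact (hZsub hx).1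
        · exact L1 hXc (BSet_mono D n (fun l t hlt => (hZsub hlt).1) hx)
      have heq : Z ∪ BSet D n Z = X := hXmin _ hsub h2
      ext x
      constructor
      · exact fun hx => hZsub hx
      · rintro ⟨hxX, hxQ⟩
        rw [← heq] at hxX
        rcases hxX with hx | hx
        · exact hx
        · exact absurd (BSet_subset_Q D n Z hx) hxQ
  · rintro X ⟨hXc, hXmin⟩
    have hXQ : ∀ q ∈ X, ¬ ReifiedAtom q := by
      have hclosed : Closed X (X \ { x | ReifiedAtom x }) (betaNd D n ∪ R) := by
        intro r hr hneg hpos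
        obtain ⟨l, hl, hlX⟩ := hXc r hr hneg (hpos.trans (fun x hx => hx.1))
        exact ⟨l, hl, hlX, head_nonreified_betaNd hR r hr l hl⟩
      have heq := hXmin _ (fun x hx => hx.1) hclosed
      intro q hq
      rw [← heq] at hq
      exact hq.2
    refine ⟨BSet D n X, BSet_subset_Q D n X, ?_, ?_⟩
    · have hagree : ∀ l : AtomR A F, ¬ ReifiedAtom l →
          (l ∈ X ↔ l ∈ X ∪ BSet D n X) :=
        fun l hnr => ⟨Or.inl,
          fun h => h.resolve_right (fun hB => hnr (BSet_subset_Q D n X hB))⟩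
      exact L2 hR hXQ
        (closed_congr (neg_nonreified_betaNd hR) hagree hXc)
    · intro Z hZsub hZcl
      have hagree : ∀ l : AtomR A F, ¬ ReifiedAtom l →
          (l ∈ X ∪ BSet D n X ↔ l ∈ X) :=
        fun l hnr => ⟨fun h => h.resolve_right
          (fun hB => (hnr (BSet_subset_Q D n X hB)).elim), Or.inl⟩
      have h5 : Closed X (Z \ { x | ReifiedAtom x }) (betaNd D n ∪ R) :=
        closed_congr (neg_nonreified_betaNd hR) hagree (L4 hR hZcl)
      have hZQsub : Z \ { x | ReifiedAtom x } ⊆ X := by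
        rintro x ⟨hxZ, hxQ⟩
        rcases hZsub hxZ with hx | hx
        · exact hx
        · exact absurd (BSet_subset_Q D n X hx) hxQ
      have heq : Z \ { x | ReifiedAtom x } = X := hXmin _ hZQsub h5
      have hBZ : BSet D n Z ⊆ Z := L1 hZcl
      have hBX : BSet D n X ⊆ Z := by
        intro x hx
        apply hBZ
        apply BSet_mono D n (S := X) (fun l t hlt => ?_) hx
        rw [← heq] at hlt
        exact hlt.1
      apply Set.Subset.antisymm hZsub
      intro x hx
      rcases hx with hx | hx
      · rw [← heq] at hx
        exact hx.1
      · exact hBX hx
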